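/- If f : ℝ → ℂ^p is almost automorphic (in Bochner's sense), then the function t ↦ f(⌊t⌋) (where ⌊·⌋ is the greatest integer function) is Z-almost automorphic. -/

import Mathlib

open MeasureTheory Filter Topology

/-- Bounded, piecewise continuous: continuous on ℝ ∖ ℤ with finite one-sided
limits at every integer. -/
def BddPC (p : ℕ) (f : ℝ → Fin p → ℂ) : Prop :=
  (∃ C : ℝ, ∀ t : ℝ, ‖f t‖ ≤ C) ∧
  ContinuousOn f {t : ℝ | ∀ n : ℤ, t ≠ (n : ℝ)} ∧
  ∀ n : ℤ, (∃ L : Fin p → ℂ, Tendsto f (𝓝[<] (n : ℝ)) (𝓝 L)) ∧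
           (∃ R : Fin p → ℂ, Tendsto f (𝓝[>] (n : ℝ)) (𝓝 R))

/-- `ℤ`-almost automorphic functions. -/
def ZAlmostAutomorphic (p : ℕ) (f : ℝ → Fin p → ℂ) : Prop :=
  BddPC p f ∧
  ∀ s : ℕ → ℤ, ∃ (φ : ℕ → ℕ) (g : ℝ → Fin p → ℂ), StrictMono φ ∧
    (∀ t : ℝ, Tendsto (fun n => f (t + (s (φ n) : ℝ))) atTop (𝓝 (g t))) ∧
    (∀ t : ℝ, Tendsto (fun n => g (t - (s (φ n) : ℝ))) atTop (𝓝 (f t)))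

/-- Almost automorphic functions in the sense of Bochner. -/
def AlmostAutomorphic (p : ℕ) (f : ℝ → Fin p → ℂ) : Prop :=
  (∃ C : ℝ, ∀ t : ℝ, ‖f t‖ ≤ C) ∧ Continuous f ∧
  ∀ s : ℕ → ℝ, ∃ (φ : ℕ → ℕ) (g : ℝ → Fin p → ℂ), StrictMono φ ∧
    (∀ t : ℝ, Tendsto (fun n => f (t + s (φ n))) atTop (𝓝 (g t))) ∧
    (∀ t : ℝ, Tendsto (fun n => g (t - s (φ n))) atTop (𝓝 (f t)))

/-- If `f : ℝ → ℂ^p` is almost automorphic in Bochner's sense, then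
`t ↦ f(⌊t⌋)` is `ℤ`-almost automorphic. -/
theorem aa_comp_floor_isZAlmostAutomorphic {p : ℕ} (f : ℝ → Fin p → ℂ)
    (hf : AlmostAutomorphic p f) :
    ZAlmostAutomorphic p (fun t : ℝ => f ((⌊t⌋ : ℤ) : ℝ)) := by
  obtain ⟨⟨C, hC⟩, hcont, hseq⟩ := hf
  constructor
  · refine ⟨⟨C, fun t => hC _⟩, ?_, ?_⟩
    · intro t ht
      have hne : t ≠ (⌊t⌋ : ℝ) := ht ⌊t⌋
      have hlt : (⌊t⌋ : ℝ) < t := lt_of_le_of_ne (Int.floor_le t) (Ne.symm hne)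
      have hev : ∀ᶠ s in 𝓝 t, (fun u : ℝ => f ((⌊u⌋ : ℤ) : ℝ)) s = f ((⌊t⌋ : ℤ) : ℝ) := by
        have : Set.Ioo ((⌊t⌋ : ℝ)) ((⌊t⌋ : ℝ) + 1) ∈ 𝓝 t :=
          Ioo_mem_nhds hlt (Int.lt_floor_add_one t)
        filter_upwards [this] with s hs
        have : ⌊s⌋ = ⌊t⌋ := by
          rw [Int.floor_eq_iff]
          exact ⟨hs.1.le, by exact_mod_cast hs.2⟩
        simp [this]
      exact (continuousAt_const.congr (Filter.EventuallyEq.symm hev)).continuousWithinAt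
    · intro n
      constructor
      · refine ⟨f ((n - 1 : ℤ) : ℝ), ?_⟩
        have hev : ∀ᶠ s in 𝓝[<] (n : ℝ), (fun u : ℝ => f ((⌊u⌋ : ℤ) : ℝ)) s
            = f ((n - 1 : ℤ) : ℝ) := by
          have : Set.Ioo ((n : ℝ) - 1) (n : ℝ) ∈ 𝓝[<] (n : ℝ) :=
            Ioo_mem_nhdsLT_of_mem ⟨by linarith, le_refl _⟩
          filter_upwards [this] with s hs
          have : ⌊s⌋ = n - 1 := by
            rw [Int.floor_eq_iff]
            push_cast
            constructor <;> [linarith [hs.1]; linarith [hs.2]]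
          simp [this]
        exact tendsto_const_nhds.congr' (Filter.EventuallyEq.symm hev)
      · refine ⟨f ((n : ℤ) : ℝ), ?_⟩
        have hev : ∀ᶠ s in 𝓝[>] (n : ℝ), (fun u : ℝ => f ((⌊u⌋ : ℤ) : ℝ)) s
            = f ((n : ℤ) : ℝ) := by
          have : Set.Ioo ((n : ℝ)) ((n : ℝ) + 1) ∈ 𝓝[>] (n : ℝ) :=
            Ioo_mem_nhdsGT_of_mem ⟨le_refl _, by linarith⟩
          filter_upwards [this] with s hs
          have : ⌊s⌋ = n := by
            rw [Int.floor_eq_iff]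
            exact ⟨hs.1.le, hs.2⟩
          simp [this]
        exact tendsto_const_nhds.congr' (Filter.EventuallyEq.symm hev)
  · intro s
    obtain ⟨φ, g, hφ, h1, h2⟩ := hseq (fun n => (s n : ℝ))
    refine ⟨φ, fun t => g ((⌊t⌋ : ℤ) : ℝ), hφ, ?_, ?_⟩
    · intro t
      have key : ∀ n, (((⌊t + (s (φ n) : ℝ)⌋ : ℤ) : ℝ)) = (⌊t⌋ : ℝ) + (s (φ n) : ℝ) := by
        intro n
        rw [Int.floor_add_intCast]
        push_cast
        ring
      simpa only [key] using h1 ((⌊t⌋ : ℤ) : ℝ)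
    · intro t
      have key : ∀ n, (((⌊t - (s (φ n) : ℝ)⌋ : ℤ) : ℝ)) = (⌊t⌋ : ℝ) - (s (φ n) : ℝ) := by
        intro n
        rw [Int.floor_sub_intCast]
        push_cast
        ring
      simpa only [key] using h2 ((⌊t⌋ : ℤ) : ℝ)
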